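/- Fix r ≥ 2, m ≥ 1, and let A_k = I_{r^{m-k}} ⊗ 𝟙_{1/r} ⊗ I_{r^{k-1}} for k ∈ [m]. For k ∈ [m] and i ∈ [r^m], let N_k(i) = {j : A_k^{ij} > 0} and D_{k-1}(i) = {j : (A_{k-1}⋯A_1)^{ij} > 0} (with D_0(i) = {i}). If u_1, u_2 ∈ N_k(i) and u_1 ≠ u_2, then D_{k-1}(u_1) ∩ D_{k-1}(u_2) = ∅. -/

import Mathlib

open Matrix BigOperators

/-- Kronecker product of square matrices, with blocks of `A ⊗ B` given by `A^{pq} • B`,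
reindexed to `Fin (M * N)`. -/
noncomputable def kron {M N : ℕ} (A : Matrix (Fin M) (Fin M) ℝ) (B : Matrix (Fin N) (Fin N) ℝ) :
    Matrix (Fin (M * N)) (Fin (M * N)) ℝ :=
  Matrix.reindex finProdFinEquiv finProdFinEquiv (Matrix.kroneckerMap (· * ·) A B)

/-- The n×n matrix with every entry equal to 1/n. -/
noncomputable def onesMat (n : ℕ) : Matrix (Fin n) (Fin n) ℝ := fun _ _ => 1 / (n : ℝ)


lemma sizeEq (r m : ℕ) (k : Fin m) : r ^ (m - 1 - k.1) * (r * r ^ k.1) = r ^ m := by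
  have hk : k.1 < m := k.isLt
  rw [← pow_succ', ← pow_add]
  congr 1
  omega

/-- The radix-r butterfly matrix `A_k = I_{r^(m-k)} ⊗ 𝟙_{1/r} ⊗ I_{r^(k-1)}`, where the
1-based index `k ∈ [m]` is represented by the 0-based `k : Fin m` (so `k.1 = k - 1`). -/
noncomputable def Ak (r m : ℕ) (k : Fin m) : Matrix (Fin (r ^ m)) (Fin (r ^ m)) ℝ :=
  Matrix.reindex (finCongr (sizeEq r m k)) (finCongr (sizeEq r m k))
    (kron (1 : Matrix (Fin (r ^ (m - 1 - k.1))) (Fin (r ^ (m - 1 - k.1))) ℝ)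
      (kron (onesMat r) (1 : Matrix (Fin (r ^ k.1)) (Fin (r ^ k.1)) ℝ)))

lemma Ak_apply' (r m : ℕ) (k : Fin m) (i j : Fin (r ^ m)) :
    Ak r m k i j =
      (if i.1 / (r * r ^ k.1) = j.1 / (r * r ^ k.1) then (1:ℝ) else 0) *
        ((1 / r) * if i.1 % r ^ k.1 = j.1 % r ^ k.1 then 1 else 0) := by
  have hd : r ^ k.1 ∣ r * r ^ k.1 := ⟨r, by ring⟩
  simp [Ak, kron, onesMat, Matrix.one_apply, Fin.divNat, Fin.modNat, Fin.ext_iff,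
    Nat.mod_mod_of_dvd _ hd]

lemma Ak_pos (r m : ℕ) (k : Fin m) (i j : Fin (r ^ m)) (h : 0 < Ak r m k i j) :
    i.1 / (r * r ^ k.1) = j.1 / (r * r ^ k.1) ∧ i.1 % r ^ k.1 = j.1 % r ^ k.1 := by
  rw [Ak_apply'] at h
  by_cases h1 : i.1 / (r * r ^ k.1) = j.1 / (r * r ^ k.1) <;>
    by_cases h2 : i.1 % r ^ k.1 = j.1 % r ^ k.1 <;>
      simp [h1, h2] at h ⊢

lemma Ak_nonneg (r m : ℕ) (k : Fin m) (i j : Fin (r ^ m)) : 0 ≤ Ak r m k i j := by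
  rw [Ak_apply']
  positivity

lemma list_prod_support {n : ℕ} (P : Fin n → Fin n → Prop)
    (hrefl : ∀ u, P u u) (htrans : ∀ a b c, P a b → P b c → P a c)
    (L : List (Matrix (Fin n) (Fin n) ℝ))
    (hL : ∀ M ∈ L, (∀ a b, 0 ≤ M a b) ∧ (∀ a b, 0 < M a b → P a b)) :
    ∀ a b, (0 ≤ L.prod a b) ∧ (0 < L.prod a b → P a b) := by
  induction L with
  | nil =>
    intro a b
    simp only [List.prod_nil]
    constructor
    · by_cases h : a = b <;> simp [Matrix.one_apply, h]
    · intro h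
      by_cases hab : a = b
      · exact hab ▸ hrefl a
      · simp [Matrix.one_apply, hab] at h
  | cons M L ih =>
    intro a b
    have hM := hL M List.mem_cons_self
    have ih' := fun N hN => hL N (List.mem_cons_of_mem M hN)
    have hterm : ∀ c, 0 ≤ M a c * L.prod c b := fun c =>
      mul_nonneg (hM.1 a c) ((ih ih' c b).1)
    rw [List.prod_cons]
    constructor
    · rw [Matrix.mul_apply]
      exact Finset.sum_nonneg fun c _ => hterm c
    · intro h
      rw [Matrix.mul_apply] at h
      obtain ⟨c, hc⟩ : ∃ c, 0 < M a c * L.prod c b := by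
        by_contra hcon
        push_neg at hcon
        have : ∀ c ∈ Finset.univ, M a c * L.prod c b = 0 :=
          fun c _ => le_antisymm (hcon c) (hterm c)
        rw [Finset.sum_eq_zero this] at h
        exact lt_irrefl 0 h
      have h1 : 0 < M a c := by
        rcases (hM.1 a c).lt_or_eq with h' | h'
        · exact h'
        · rw [← h'] at hc; simp at hc
      have h2 : 0 < L.prod c b := by
        rcases ((ih ih' c b).1).lt_or_eq with h' | h'
        · exact h'
        · rw [← h'] at hc; simp at hc
      exact htrans a c b (hM.2 a c h1) ((ih ih' c b).2 h2)

/-- Distinct parents u₁ ≠ u₂ of the same index i through A_k have disjoint ancestor sets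
D_{k-1}(u₁) ∩ D_{k-1}(u₂) = ∅, where D_{k-1}(u) is the support of row u of A_{k-1} ⋯ A_1
(the empty product for k = 1, giving D_0(u) = {u}). -/
theorem butterfly_parents_disjoint_ancestors (r m : ℕ) (hr : 2 ≤ r) (k : ℕ)
    (hk1 : 1 ≤ k) (hk2 : k ≤ m) (i u₁ u₂ : Fin (r ^ m))
    (h1 : 0 < Ak r m ⟨k - 1, by omega⟩ i u₁)
    (h2 : 0 < Ak r m ⟨k - 1, by omega⟩ i u₂)
    (hne : u₁ ≠ u₂) :
    {j : Fin (r ^ m) |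
        0 < ((List.ofFn (fun t : Fin (k - 1) =>
          Ak r m (Fin.castLE (by omega : k - 1 ≤ m) t))).reverse.prod) u₁ j}
      ∩ {j : Fin (r ^ m) |
        0 < ((List.ofFn (fun t : Fin (k - 1) =>
          Ak r m (Fin.castLE (by omega : k - 1 ≤ m) t))).reverse.prod) u₂ j}
      = ∅ := by
  set P : Fin (r ^ m) → Fin (r ^ m) → Prop :=
    fun a b => a.1 / r ^ (k - 1) = b.1 / r ^ (k - 1) with hP
  have key := list_prod_support P (fun u => rfl)
    (fun a b c hab hbc => hab.trans hbc)
    ((List.ofFn (fun t : Fin (k - 1) =>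
        Ak r m (Fin.castLE (by omega : k - 1 ≤ m) t))).reverse)
    (by
      intro M hM
      rw [List.mem_reverse, List.mem_ofFn] at hM
      obtain ⟨t, rfl⟩ := hM
      refine ⟨fun a b => Ak_nonneg _ _ _ _ _, fun a b hpos => ?_⟩
      have := (Ak_pos _ _ _ _ _ hpos).1
      simp only [Fin.coe_castLE] at this
      have ht : t.1 + 1 ≤ k - 1 := by omega
      have hsplit : r ^ (k - 1) = (r * r ^ t.1) * r ^ (k - 1 - (t.1 + 1)) := by
        rw [← pow_succ', ← pow_add]
        congr 1
        omega
      show a.1 / r ^ (k - 1) = b.1 / r ^ (k - 1)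
      calc a.1 / r ^ (k - 1)
          = a.1 / (r * r ^ t.1) / r ^ (k - 1 - (t.1 + 1)) := by
            rw [Nat.div_div_eq_div_mul, ← hsplit]
        _ = b.1 / (r * r ^ t.1) / r ^ (k - 1 - (t.1 + 1)) := by rw [this]
        _ = b.1 / r ^ (k - 1) := by rw [Nat.div_div_eq_div_mul, ← hsplit])
  ext j
  simp only [Set.mem_inter_iff, Set.mem_setOf_eq, Set.mem_empty_iff_false, iff_false]
  rintro ⟨hj1, hj2⟩
  apply hne
  have p1 : P u₁ j := (key u₁ j).2 hj1
  have p2 : P u₂ j := (key u₂ j).2 hj2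
  have hdiv : u₁.1 / r ^ (k - 1) = u₂.1 / r ^ (k - 1) := p1.trans p2.symm
  have hm1 := (Ak_pos _ _ _ _ _ h1).2
  have hm2 := (Ak_pos _ _ _ _ _ h2).2
  simp only at hm1 hm2
  have hmod : u₁.1 % r ^ (k - 1) = u₂.1 % r ^ (k - 1) := hm1 ▸ hm2
  apply Fin.ext
  conv_lhs => rw [← Nat.div_add_mod u₁.1 (r ^ (k - 1))]
  conv_rhs => rw [← Nat.div_add_mod u₂.1 (r ^ (k - 1))]
  rw [hdiv, hmod]
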